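/- Let $x, y \in \mathbb{R}$ with $0 \le x \le 1/2$, $y \ge \sqrt{1-x^2}$, and define $f_\tau : \mathbb{R}^2 \to \mathbb{R}^6$ by $f_\tau(u,v) = (\sqrt{r_1}\cos(2\pi v/y), \sqrt{r_1}\sin(2\pi v/y), \sqrt{r_2}\cos(2\pi(u - vx/y)), \sqrt{r_2}\sin(2\pi(u - vx/y)), \sqrt{r_3}\cos(2\pi(u - v(x-1)/y)), \sqrt{r_3}\sin(2\pi(u - v(x-1)/y)))$ with $r_1, r_2, r_3$ as usual. Then $|f_\tau(u,v)| = 1$ for all $(u,v)$, and the pullback metric satisfies $|df_\tau|^2 = \frac{4\pi^2}{y^2 + x^2 - x + 1}(du^2 + dv^2)$, i.e., $f_\tau$ is a homothetic (conformal) immersion into $S^5$. -/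

import Mathlib

open Real

theorem stmt_17 (x y : ℝ) (hx0 : 0 ≤ x) (hx1 : x ≤ 1/2)
    (hy : Real.sqrt (1 - x^2) ≤ y)
    (r1 r2 r3 : ℝ)
    (hr1 : r1 = (y^2 + x^2 - x) / (y^2 + x^2 - x + 1))
    (hr2 : r2 = (1 - x) / (y^2 + x^2 - x + 1))
    (hr3 : r3 = x / (y^2 + x^2 - x + 1))
    (f : ℝ → ℝ → Fin 6 → ℝ)
    (hf : ∀ u v : ℝ, f u v =
      ![Real.sqrt r1 * Real.cos (2 * π * v / y),
        Real.sqrt r1 * Real.sin (2 * π * v / y),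
        Real.sqrt r2 * Real.cos (2 * π * (u - v * x / y)),
        Real.sqrt r2 * Real.sin (2 * π * (u - v * x / y)),
        Real.sqrt r3 * Real.cos (2 * π * (u - v * (x - 1) / y)),
        Real.sqrt r3 * Real.sin (2 * π * (u - v * (x - 1) / y))]) :
    (∀ u v : ℝ, ∑ i : Fin 6, (f u v i)^2 = 1) ∧
    (∀ u v : ℝ, ∑ i : Fin 6, (deriv (fun u' => f u' v i) u)^2
        = 4 * π^2 / (y^2 + x^2 - x + 1)) ∧
    (∀ u v : ℝ, ∑ i : Fin 6, (deriv (fun v' => f u v' i) v)^2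
        = 4 * π^2 / (y^2 + x^2 - x + 1)) ∧
    (∀ u v : ℝ, ∑ i : Fin 6,
        (deriv (fun u' => f u' v i) u) * (deriv (fun v' => f u v' i) v) = 0) := by
  -- basic positivity facts
  have h1x : (0:ℝ) ≤ 1 - x^2 := by nlinarith
  have hsx : Real.sqrt (1 - x^2) ^ 2 = 1 - x^2 := Real.sq_sqrt h1x
  have hsn : 0 ≤ Real.sqrt (1 - x^2) := Real.sqrt_nonneg _
  have hy2 : 1 - x^2 ≤ y^2 := by nlinarith
  have hy0 : 0 < y := by
    have : 0 < Real.sqrt (1 - x^2) := Real.sqrt_pos.mpr (by nlinarith)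
    linarith
  have hD : 0 < y^2 + x^2 - x + 1 := by nlinarith
  have hr1n : 0 ≤ r1 := by
    rw [hr1]; exact div_nonneg (by nlinarith) hD.le
  have hr2n : 0 ≤ r2 := by
    rw [hr2]; exact div_nonneg (by linarith) hD.le
  have hr3n : 0 ≤ r3 := by
    rw [hr3]; exact div_nonneg hx0 hD.le
  have h1 : Real.sqrt r1 ^ 2 = r1 := Real.sq_sqrt hr1n
  have h2 : Real.sqrt r2 ^ 2 = r2 := Real.sq_sqrt hr2n
  have h3 : Real.sqrt r3 ^ 2 = r3 := Real.sq_sqrt hr3n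
  have hDne : (y^2 + x^2 - x + 1) ≠ 0 := hD.ne'
  have hyne : y ≠ 0 := hy0.ne'
  -- sum identities
  have Hsum : r1 + r2 + r3 = 1 := by
    rw [hr1, hr2, hr3]; field_simp; ring
  have H2 : r2 + r3 = 1 / (y^2 + x^2 - x + 1) := by
    rw [hr2, hr3]; field_simp; ring
  have H3 : r1 + x^2 * r2 + (x-1)^2 * r3 = y^2 / (y^2 + x^2 - x + 1) := by
    rw [hr1, hr2, hr3]; field_simp; ring
  have H4 : x * r2 + (x-1) * r3 = 0 := by
    rw [hr2, hr3]; field_simp; ring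
  -- componentwise formulas
  have f0 : ∀ w z : ℝ, f w z 0 = Real.sqrt r1 * Real.cos (2 * π * z / y) :=
    fun w z => by rw [hf]; rfl
  have f1 : ∀ w z : ℝ, f w z 1 = Real.sqrt r1 * Real.sin (2 * π * z / y) :=
    fun w z => by rw [hf]; rfl
  have f2 : ∀ w z : ℝ, f w z 2 = Real.sqrt r2 * Real.cos (2 * π * (w - z * x / y)) :=
    fun w z => by rw [hf]; rfl
  have f3 : ∀ w z : ℝ, f w z 3 = Real.sqrt r2 * Real.sin (2 * π * (w - z * x / y)) :=
    fun w z => by rw [hf]; rfl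
  have f4 : ∀ w z : ℝ, f w z 4 = Real.sqrt r3 * Real.cos (2 * π * (w - z * (x-1) / y)) :=
    fun w z => by rw [hf]; rfl
  have f5 : ∀ w z : ℝ, f w z 5 = Real.sqrt r3 * Real.sin (2 * π * (w - z * (x-1) / y)) :=
    fun w z => by rw [hf]; rfl
  refine ⟨?_, ?_, ?_, ?_⟩
  · -- norm one
    intro u v
    rw [Fin.sum_univ_six, f0, f1, f2, f3, f4, f5]
    have p1 := Real.sin_sq_add_cos_sq (2 * π * v / y)
    have p2 := Real.sin_sq_add_cos_sq (2 * π * (u - v * x / y))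
    have p3 := Real.sin_sq_add_cos_sq (2 * π * (u - v * (x-1) / y))
    linear_combination (Real.sin (2 * π * v / y)^2 + Real.cos (2 * π * v / y)^2) * h1 +
      r1 * p1 +
      (Real.sin (2 * π * (u - v * x / y))^2 + Real.cos (2 * π * (u - v * x / y))^2) * h2 +
      r2 * p2 +
      (Real.sin (2 * π * (u - v * (x-1) / y))^2 + Real.cos (2 * π * (u - v * (x-1) / y))^2) * h3 +
      r3 * p3 + Hsum
  · -- u-derivatives
    intro u v
    have g2 : HasDerivAt (fun u' : ℝ => 2 * π * (u' - v * x / y)) (2*π) u := by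
      simpa using ((hasDerivAt_id u).sub_const (v * x / y)).const_mul (2*π)
    have g3 : HasDerivAt (fun u' : ℝ => 2 * π * (u' - v * (x-1) / y)) (2*π) u := by
      simpa using ((hasDerivAt_id u).sub_const (v * (x-1) / y)).const_mul (2*π)
    have d2 := (g2.cos.const_mul (Real.sqrt r2)).deriv
    have d3 := (g2.sin.const_mul (Real.sqrt r2)).deriv
    have d4 := (g3.cos.const_mul (Real.sqrt r3)).deriv
    have d5 := (g3.sin.const_mul (Real.sqrt r3)).deriv
    rw [Fin.sum_univ_six]
    simp only [f0, f1, f2, f3, f4, f5]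
    rw [d2, d3, d4, d5, deriv_const, deriv_const]
    have p2 := Real.sin_sq_add_cos_sq (2 * π * (u - v * x / y))
    have p3 := Real.sin_sq_add_cos_sq (2 * π * (u - v * (x-1) / y))
    linear_combination (4*π^2*(Real.sin (2 * π * (u - v * x / y))^2 +
        Real.cos (2 * π * (u - v * x / y))^2)) * h2 + (4*π^2*r2) * p2 +
      (4*π^2*(Real.sin (2 * π * (u - v * (x-1) / y))^2 +
        Real.cos (2 * π * (u - v * (x-1) / y))^2)) * h3 + (4*π^2*r3) * p3 +
      (4*π^2) * H2
  · -- v-derivatives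
    intro u v
    have g1 : HasDerivAt (fun v' : ℝ => 2 * π * v' / y) (2*π/y) v := by
      simpa using ((hasDerivAt_id v).const_mul (2*π)).div_const y
    have g2 : HasDerivAt (fun v' : ℝ => 2 * π * (u - v' * x / y)) (-(2*π*x/y)) v := by
      have := ((((hasDerivAt_id v).mul_const x).div_const y).const_sub u).const_mul (2*π)
      exact this.congr_deriv (by ring)
    have g3 : HasDerivAt (fun v' : ℝ => 2 * π * (u - v' * (x-1) / y)) (-(2*π*(x-1)/y)) v := by
      have := ((((hasDerivAt_id v).mul_const (x-1)).div_const y).const_sub u).const_mul (2*π)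
      exact this.congr_deriv (by ring)
    have d0 := (g1.cos.const_mul (Real.sqrt r1)).deriv
    have d1 := (g1.sin.const_mul (Real.sqrt r1)).deriv
    have d2 := (g2.cos.const_mul (Real.sqrt r2)).deriv
    have d3 := (g2.sin.const_mul (Real.sqrt r2)).deriv
    have d4 := (g3.cos.const_mul (Real.sqrt r3)).deriv
    have d5 := (g3.sin.const_mul (Real.sqrt r3)).deriv
    rw [Fin.sum_univ_six]
    simp only [f0, f1, f2, f3, f4, f5]
    rw [d0, d1, d2, d3, d4, d5]
    have p1 := Real.sin_sq_add_cos_sq (2 * π * v / y)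
    have p2 := Real.sin_sq_add_cos_sq (2 * π * (u - v * x / y))
    have p3 := Real.sin_sq_add_cos_sq (2 * π * (u - v * (x-1) / y))
    have e : (Real.sqrt r1 * (-Real.sin (2 * π * v / y) * (2*π/y)))^2 +
        (Real.sqrt r1 * (Real.cos (2 * π * v / y) * (2*π/y)))^2 +
        (Real.sqrt r2 * (-Real.sin (2 * π * (u - v * x / y)) * (-(2*π*x/y))))^2 +
        (Real.sqrt r2 * (Real.cos (2 * π * (u - v * x / y)) * (-(2*π*x/y))))^2 +
        (Real.sqrt r3 * (-Real.sin (2 * π * (u - v * (x-1) / y)) * (-(2*π*(x-1)/y))))^2 +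
        (Real.sqrt r3 * (Real.cos (2 * π * (u - v * (x-1) / y)) * (-(2*π*(x-1)/y))))^2
        = 4*π^2/y^2 * (r1 + x^2 * r2 + (x-1)^2 * r3) := by
      linear_combination (4*π^2/y^2*(Real.sin (2 * π * v / y)^2 + Real.cos (2 * π * v / y)^2)) * h1 +
        (4*π^2/y^2*r1) * p1 +
        (4*π^2*x^2/y^2*(Real.sin (2 * π * (u - v * x / y))^2 +
          Real.cos (2 * π * (u - v * x / y))^2)) * h2 + (4*π^2*x^2/y^2*r2) * p2 +
        (4*π^2*(x-1)^2/y^2*(Real.sin (2 * π * (u - v * (x-1) / y))^2 +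
          Real.cos (2 * π * (u - v * (x-1) / y))^2)) * h3 + (4*π^2*(x-1)^2/y^2*r3) * p3
    rw [e, H3]
    field_simp
  · -- orthogonality
    intro u v
    have g2u : HasDerivAt (fun u' : ℝ => 2 * π * (u' - v * x / y)) (2*π) u := by
      simpa using ((hasDerivAt_id u).sub_const (v * x / y)).const_mul (2*π)
    have g3u : HasDerivAt (fun u' : ℝ => 2 * π * (u' - v * (x-1) / y)) (2*π) u := by
      simpa using ((hasDerivAt_id u).sub_const (v * (x-1) / y)).const_mul (2*π)
    have g2v : HasDerivAt (fun v' : ℝ => 2 * π * (u - v' * x / y)) (-(2*π*x/y)) v := by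
      have := ((((hasDerivAt_id v).mul_const x).div_const y).const_sub u).const_mul (2*π)
      exact this.congr_deriv (by ring)
    have g3v : HasDerivAt (fun v' : ℝ => 2 * π * (u - v' * (x-1) / y)) (-(2*π*(x-1)/y)) v := by
      have := ((((hasDerivAt_id v).mul_const (x-1)).div_const y).const_sub u).const_mul (2*π)
      exact this.congr_deriv (by ring)
    have d2u := (g2u.cos.const_mul (Real.sqrt r2)).deriv
    have d3u := (g2u.sin.const_mul (Real.sqrt r2)).deriv
    have d4u := (g3u.cos.const_mul (Real.sqrt r3)).deriv
    have d5u := (g3u.sin.const_mul (Real.sqrt r3)).deriv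
    have d2v := (g2v.cos.const_mul (Real.sqrt r2)).deriv
    have d3v := (g2v.sin.const_mul (Real.sqrt r2)).deriv
    have d4v := (g3v.cos.const_mul (Real.sqrt r3)).deriv
    have d5v := (g3v.sin.const_mul (Real.sqrt r3)).deriv
    rw [Fin.sum_univ_six]
    simp only [f0, f1, f2, f3, f4, f5]
    rw [d2u, d3u, d4u, d5u, d2v, d3v, d4v, d5v, deriv_const, deriv_const]
    have p2 := Real.sin_sq_add_cos_sq (2 * π * (u - v * x / y))
    have p3 := Real.sin_sq_add_cos_sq (2 * π * (u - v * (x-1) / y))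
    linear_combination (-(4*π^2*x/y)*(Real.sin (2 * π * (u - v * x / y))^2 +
        Real.cos (2 * π * (u - v * x / y))^2)) * h2 + (-(4*π^2*x/y)*r2) * p2 +
      (-(4*π^2*(x-1)/y)*(Real.sin (2 * π * (u - v * (x-1) / y))^2 +
        Real.cos (2 * π * (u - v * (x-1) / y))^2)) * h3 + (-(4*π^2*(x-1)/y)*r3) * p3 +
      (-(4*π^2/y)) * H4
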